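/- (Local smoothness condition.) Suppose Assumptions A1 and A2 both hold with parameter δ satisfying 0 < δ ≤ σ_r/16, and suppose in addition that (1/m) Σ_{i=1}^m ‖A_i‖² ≤ 9n (operator norms). Then for any Z ∈ R^{n×r} with d(Z, Z*) ≤ √((3/16) σ_r), setting H = Z − Z̄, we have ‖∇f(Z)‖_F² ≤ 144 n (‖Z̄‖_F² + (3/16) σ_r) · ((σ_1 + (9/64) σ_r) ‖H‖_F² + ‖H^T Z̄‖_F²). -/

import Mathlib

open Matrix MeasureTheory ProbabilityTheory Real
open scoped BigOperators ENNReal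

noncomputable section

/-- Frobenius norm of a real matrix. -/
def frobNorm {a b : ℕ} (M : Matrix (Fin a) (Fin b) ℝ) : ℝ :=
  Real.sqrt (∑ i, ∑ j, (M i j) ^ 2)

/-- Frobenius (trace) inner product `⟨M, N⟩ = trace (Mᵀ N)`. -/
def frobInner {a b : ℕ} (M N : Matrix (Fin a) (Fin b) ℝ) : ℝ :=
  ∑ i, ∑ j, M i j * N i j

/-- Operator (spectral) norm of a real square matrix. -/
def opNorm {n : ℕ} (M : Matrix (Fin n) (Fin n) ℝ) : ℝ :=
  ‖LinearMap.toContinuousLinearMap (Matrix.toEuclideanLin M)‖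

/-- An `r × r` real matrix is orthonormal if `U Uᵀ = Uᵀ U = I`. -/
def IsOrthoMat {r : ℕ} (U : Matrix (Fin r) (Fin r) ℝ) : Prop :=
  U * Uᵀ = 1 ∧ Uᵀ * U = 1

/-- The solution set `S̃ = {Z* U : U orthonormal}`. -/
def solSet {n r : ℕ} (Zstar : Matrix (Fin n) (Fin r) ℝ) : Set (Matrix (Fin n) (Fin r) ℝ) :=
  {Zt | ∃ U, IsOrthoMat U ∧ Zt = Zstar * U}

/-- The distance `d(Z, Z*) = min_{Z̃ ∈ S̃} ‖Z − Z̃‖_F`. -/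
def dSol {n r : ℕ} (Z Zstar : Matrix (Fin n) (Fin r) ℝ) : ℝ :=
  ⨅ Zt : solSet Zstar, frobNorm (Z - (Zt : Matrix (Fin n) (Fin r) ℝ))

/-- `Zbar` is a matrix in the solution set closest to `Z`. -/
def IsClosest {n r : ℕ} (Zstar Z Zbar : Matrix (Fin n) (Fin r) ℝ) : Prop :=
  Zbar ∈ solSet Zstar ∧ ∀ Zt ∈ solSet Zstar, frobNorm (Z - Zbar) ≤ frobNorm (Z - Zt)

/-- The gradient `∇f(Z) = (1/m) Σ_i (trace(Zᵀ A_i Z) − b_i) A_i Z`. -/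
def gradf {n r m : ℕ} (A : Fin m → Matrix (Fin n) (Fin n) ℝ) (b : Fin m → ℝ)
    (Z : Matrix (Fin n) (Fin r) ℝ) : Matrix (Fin n) (Fin r) ℝ :=
  (1 / (m : ℝ)) • ∑ i, (Matrix.trace (Zᵀ * A i * Z) - b i) • (A i * Z)

/-- Assumption A1 with parameter `δ`. -/
def AssumpA1 {n m : ℕ} (A : Fin m → Matrix (Fin n) (Fin n) ℝ) (σ1 : ℝ) (r : ℕ)
    (δ : ℝ) : Prop :=
  ∀ u : Fin n → ℝ, Real.sqrt (∑ i, u i ^ 2) ≤ Real.sqrt σ1 →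
    opNorm ((1 / (m : ℝ)) • ∑ i, (u ⬝ᵥ (A i).mulVec u) • A i - (2 : ℝ) • vecMulVec u u)
      ≤ δ / r

/-- Assumption A2 with parameter `δ`. -/
def AssumpA2 {n r m : ℕ} (A : Fin m → Matrix (Fin n) (Fin n) ℝ)
    (Zstar : Matrix (Fin n) (Fin r) ℝ) (δ : ℝ) : Prop :=
  ∀ Zt ∈ solSet Zstar, ∀ s k : Fin r,
    opNorm ((1 / (m : ℝ)) •
        ∑ i, (2 : ℝ) • (A i * vecMulVec (fun j => Zt j s) (fun j => Zt j k) * A i)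
      - ((2 * ((fun j => Zt j s) ⬝ᵥ fun j => Zt j k)) • (1 : Matrix (Fin n) (Fin n) ℝ)
          + (2 : ℝ) • vecMulVec (fun j => Zt j k) (fun j => Zt j s)))
      ≤ δ / r

/-! ### Auxiliary lemmas -/

/-- Euclidean norm of a vector. -/
def vnorm {n : ℕ} (u : Fin n → ℝ) : ℝ := Real.sqrt (∑ i, u i ^ 2)

lemma enorm_eq {n : ℕ} (u : Fin n → ℝ) :
    vnorm u = ‖(WithLp.equiv 2 (Fin n → ℝ)).symm u‖ := by
  rw [EuclideanSpace.norm_eq, vnorm]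
  congr 1
  refine Finset.sum_congr rfl fun i _ => ?_
  rw [Real.norm_eq_abs, sq_abs]; rfl

lemma enorm_nonneg {n : ℕ} (u : Fin n → ℝ) : 0 ≤ vnorm u := Real.sqrt_nonneg _

lemma enorm_sq {n : ℕ} (u : Fin n → ℝ) : vnorm u ^ 2 = ∑ i, u i ^ 2 :=
  Real.sq_sqrt (Finset.sum_nonneg fun _ _ => sq_nonneg _)

lemma opNorm_nonneg {n : ℕ} (M : Matrix (Fin n) (Fin n) ℝ) : 0 ≤ opNorm M := norm_nonneg _

lemma mulVec_enorm_le {n : ℕ} (M : Matrix (Fin n) (Fin n) ℝ) (v : Fin n → ℝ) :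
    vnorm (M.mulVec v) ≤ opNorm M * vnorm v := by
  rw [enorm_eq, enorm_eq]
  have h := ContinuousLinearMap.le_opNorm
    (LinearMap.toContinuousLinearMap (Matrix.toEuclideanLin M))
    ((WithLp.equiv 2 (Fin n → ℝ)).symm v)
  have e : (LinearMap.toContinuousLinearMap (Matrix.toEuclideanLin M))
      ((WithLp.equiv 2 (Fin n → ℝ)).symm v)
      = (WithLp.equiv 2 (Fin n → ℝ)).symm (M.mulVec v) := rfl
  rw [e] at h; exact h

lemma dotProduct_mulVec_le {n : ℕ} (M : Matrix (Fin n) (Fin n) ℝ) (u v : Fin n → ℝ) :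
    |u ⬝ᵥ M.mulVec v| ≤ opNorm M * vnorm u * vnorm v := by
  have h1 : |u ⬝ᵥ M.mulVec v| ≤ vnorm u * vnorm (M.mulVec v) := by
    have h := abs_real_inner_le_norm ((WithLp.equiv 2 (Fin n → ℝ)).symm u)
      ((WithLp.equiv 2 (Fin n → ℝ)).symm (M.mulVec v))
    have e : (inner ℝ ((WithLp.equiv 2 (Fin n → ℝ)).symm u)
        ((WithLp.equiv 2 (Fin n → ℝ)).symm (M.mulVec v)) : ℝ) = u ⬝ᵥ M.mulVec v := by
      rw [PiLp.inner_apply]; simp [dotProduct, mul_comm]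
    rw [e, ← enorm_eq, ← enorm_eq] at h; exact h
  calc |u ⬝ᵥ M.mulVec v| ≤ vnorm u * vnorm (M.mulVec v) := h1
    _ ≤ vnorm u * (opNorm M * vnorm v) :=
        mul_le_mul_of_nonneg_left (mulVec_enorm_le M v) (enorm_nonneg u)
    _ = opNorm M * vnorm u * vnorm v := by ring

/-- flattening linear map -/
def toELM {a b : ℕ} : Matrix (Fin a) (Fin b) ℝ →ₗ[ℝ] EuclideanSpace ℝ (Fin a × Fin b) where
  toFun M := (WithLp.equiv 2 (Fin a × Fin b → ℝ)).symm (fun p => M p.1 p.2)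
  map_add' := fun _ _ => rfl
  map_smul' := fun _ _ => rfl

lemma frobNorm_eq_toE {a b : ℕ} (M : Matrix (Fin a) (Fin b) ℝ) :
    frobNorm M = ‖toELM M‖ := by
  rw [EuclideanSpace.norm_eq, frobNorm]
  congr 1
  rw [Fintype.sum_prod_type]
  refine Finset.sum_congr rfl fun p _ => Finset.sum_congr rfl fun q _ => ?_
  rw [Real.norm_eq_abs, sq_abs]; rfl

lemma frobNorm_nonneg {a b : ℕ} (M : Matrix (Fin a) (Fin b) ℝ) : 0 ≤ frobNorm M :=
  Real.sqrt_nonneg _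

lemma frobNorm_sq {a b : ℕ} (M : Matrix (Fin a) (Fin b) ℝ) :
    frobNorm M ^ 2 = ∑ i, ∑ j, (M i j) ^ 2 :=
  Real.sq_sqrt (Finset.sum_nonneg fun _ _ => Finset.sum_nonneg fun _ _ => sq_nonneg _)

lemma frobNorm_smul {a b : ℕ} (c : ℝ) (M : Matrix (Fin a) (Fin b) ℝ) :
    frobNorm (c • M) = |c| * frobNorm M := by
  rw [frobNorm_eq_toE, frobNorm_eq_toE, _root_.map_smul, norm_smul, Real.norm_eq_abs]

lemma frobNorm_sum_le {ι : Type*} [Fintype ι] {a' b' : ℕ}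
    (f : ι → Matrix (Fin a') (Fin b') ℝ) :
    frobNorm (∑ i, f i) ≤ ∑ i, frobNorm (f i) := by
  rw [frobNorm_eq_toE, map_sum]
  refine (norm_sum_le _ _).trans ?_
  exact le_of_eq (Finset.sum_congr rfl fun i _ => (frobNorm_eq_toE (f i)).symm)

lemma frobNorm_add_le {a b : ℕ} (M N : Matrix (Fin a) (Fin b) ℝ) :
    frobNorm (M + N) ≤ frobNorm M + frobNorm N := by
  rw [frobNorm_eq_toE, frobNorm_eq_toE, frobNorm_eq_toE, map_add]
  exact norm_add_le _ _

lemma frobNorm_col_sq {a b : ℕ} (M : Matrix (Fin a) (Fin b) ℝ) :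
    frobNorm M ^ 2 = ∑ j, vnorm (fun i => M i j) ^ 2 := by
  rw [frobNorm_sq, Finset.sum_comm]
  exact Finset.sum_congr rfl fun j _ => (enorm_sq _).symm

lemma lsc_sqle {x y : ℝ} (hx : 0 ≤ x) (hy : 0 ≤ y) (h : x ^ 2 ≤ y ^ 2) : x ≤ y := by
  nlinarith

lemma frobNorm_mul_le {n r : ℕ} (M : Matrix (Fin n) (Fin n) ℝ)
    (B : Matrix (Fin n) (Fin r) ℝ) :
    frobNorm (M * B) ≤ opNorm M * frobNorm B := by
  refine lsc_sqle (frobNorm_nonneg _)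
    (mul_nonneg (opNorm_nonneg M) (frobNorm_nonneg B)) ?_
  rw [frobNorm_col_sq, mul_pow, frobNorm_col_sq, Finset.mul_sum]
  refine Finset.sum_le_sum fun j _ => ?_
  have hcol : (fun i => (M * B) i j) = M.mulVec (fun i => B i j) := by
    funext i; simp [Matrix.mul_apply, Matrix.mulVec, dotProduct]
  rw [hcol, ← mul_pow]
  have := mulVec_enorm_le M (fun i => B i j)
  nlinarith [enorm_nonneg (M.mulVec (fun i => B i j)), enorm_nonneg (fun i => B i j),
    opNorm_nonneg M]

section Quad
variable {n : ℕ} (u v w x : Fin n → ℝ) (M N : Matrix (Fin n) (Fin n) ℝ)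

lemma quad_sub : u ⬝ᵥ (M - N).mulVec v = u ⬝ᵥ M.mulVec v - u ⬝ᵥ N.mulVec v := by
  rw [Matrix.sub_mulVec, dotProduct_sub]

lemma quad_smul (c : ℝ) : u ⬝ᵥ (c • M).mulVec v = c * (u ⬝ᵥ M.mulVec v) := by
  rw [Matrix.smul_mulVec, dotProduct_smul]; rfl

lemma quad_sum {m : ℕ} (f : Fin m → Matrix (Fin n) (Fin n) ℝ) :
    u ⬝ᵥ (∑ i, f i).mulVec v = ∑ i, u ⬝ᵥ (f i).mulVec v := by
  induction (Finset.univ : Finset (Fin m)) using Finset.cons_induction with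
  | empty => simp
  | cons a s ha ih => rw [Finset.sum_cons, Finset.sum_cons, Matrix.add_mulVec,
      dotProduct_add, ih]

lemma quad_add : u ⬝ᵥ (M + N).mulVec v = u ⬝ᵥ M.mulVec v + u ⬝ᵥ N.mulVec v := by
  rw [Matrix.add_mulVec, dotProduct_add]

lemma quad_vecMulVec : u ⬝ᵥ (vecMulVec w x).mulVec v = (u ⬝ᵥ w) * (x ⬝ᵥ v) := by
  simp [vecMulVec_apply, Matrix.mulVec, dotProduct, Finset.mul_sum, Finset.sum_mul, mul_assoc]
  rw [Finset.sum_comm]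

lemma quad_one : u ⬝ᵥ (1 : Matrix (Fin n) (Fin n) ℝ).mulVec v = u ⬝ᵥ v := by
  rw [Matrix.one_mulVec]

lemma quad_symm (h : M.IsSymm) : u ⬝ᵥ M.mulVec v = v ⬝ᵥ M.mulVec u := by
  rw [Matrix.dotProduct_mulVec, ← Matrix.mulVec_transpose, h.eq, dotProduct_comm]

lemma quad_sandwich (a b' : Fin n → ℝ) :
    u ⬝ᵥ (M * vecMulVec a b' * M).mulVec v
      = (u ⬝ᵥ M.mulVec a) * (b' ⬝ᵥ M.mulVec v) := by
  rw [← Matrix.mulVec_mulVec, ← Matrix.mulVec_mulVec]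
  have hX : (vecMulVec a b').mulVec (M.mulVec v) = (b' ⬝ᵥ M.mulVec v) • a := by
    funext i
    simp only [Matrix.mulVec, vecMulVec_apply, dotProduct, Pi.smul_apply, smul_eq_mul,
      Finset.mul_sum, Finset.sum_mul]
    exact Finset.sum_congr rfl fun j _ => Finset.sum_congr rfl fun x _ => by ring
  rw [hX, Matrix.mulVec_smul, dotProduct_smul, smul_eq_mul]
  ring

end Quad

lemma sum_sq_swap {m r : ℕ} (g : Fin m → Fin r → ℝ) :
    ∑ i, (∑ s, g i s) ^ 2 = ∑ s, ∑ k, ∑ i, g i s * g i k := by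
  have h1 : ∀ i : Fin m, (∑ s, g i s) ^ 2 = ∑ s, ∑ k, g i s * g i k := by
    intro i; rw [sq, Finset.sum_mul_sum]
  rw [Finset.sum_congr rfl fun i _ => h1 i, Finset.sum_comm]
  exact Finset.sum_congr rfl fun s _ => Finset.sum_comm

lemma trace_quad {n r : ℕ} (A : Matrix (Fin n) (Fin n) ℝ)
    (X Y : Matrix (Fin n) (Fin r) ℝ) :
    Matrix.trace (Xᵀ * A * Y) = ∑ s, (fun j => X j s) ⬝ᵥ A.mulVec (fun j => Y j s) := by
  simp only [Matrix.trace, Matrix.diag, Matrix.mul_apply, Matrix.transpose_apply,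
    Matrix.mulVec, dotProduct, Finset.sum_mul, Finset.mul_sum]
  refine Finset.sum_congr rfl fun s _ => ?_
  rw [Finset.sum_comm]
  refine Finset.sum_congr rfl fun i _ => Finset.sum_congr rfl fun k _ => by ring

lemma trace_mul_sum {r : ℕ} (P Q : Matrix (Fin r) (Fin r) ℝ) :
    Matrix.trace (P * Q) = ∑ s, ∑ k, P s k * Q k s := by
  simp [Matrix.trace, Matrix.diag, Matrix.mul_apply]

lemma spectral_bound {n r : ℕ} (hr : 0 < r) (sig : Fin r → ℝ)
    (hmono : ∀ s t : Fin r, s ≤ t → sig t ≤ sig s)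
    (Zstar : Matrix (Fin n) (Fin r) ℝ)
    (V : Matrix (Fin r) (Fin r) ℝ) (hV : V * Vᵀ = 1 ∧ Vᵀ * V = 1)
    (hspec : Zstarᵀ * Zstar = V * Matrix.diagonal sig * Vᵀ)
    (U : Matrix (Fin r) (Fin r) ℝ) (hU : U * Uᵀ = 1 ∧ Uᵀ * U = 1)
    (H : Matrix (Fin n) (Fin r) ℝ) :
    Matrix.trace (((Zstar * U)ᵀ * (Zstar * U)) * (Hᵀ * H))
      ≤ sig ⟨0, hr⟩ * Matrix.trace (Hᵀ * H) := by
  set W : Matrix (Fin r) (Fin r) ℝ := Vᵀ * U with hW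
  have hWW : Wᵀ * W = 1 := by
    rw [hW, Matrix.transpose_mul, Matrix.transpose_transpose]
    calc Uᵀ * V * (Vᵀ * U) = Uᵀ * (V * Vᵀ) * U := by
          rw [Matrix.mul_assoc, Matrix.mul_assoc, Matrix.mul_assoc]
      _ = 1 := by rw [hV.1, Matrix.mul_one, hU.2]
  have hG : (Zstar * U)ᵀ * (Zstar * U) = Wᵀ * Matrix.diagonal sig * W := by
    rw [Matrix.transpose_mul, hW, Matrix.transpose_mul, Matrix.transpose_transpose]
    calc Uᵀ * Zstarᵀ * (Zstar * U) = Uᵀ * (Zstarᵀ * Zstar) * U := by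
          rw [Matrix.mul_assoc, Matrix.mul_assoc, Matrix.mul_assoc]
      _ = Uᵀ * (V * Matrix.diagonal sig * Vᵀ) * U := by rw [hspec]
      _ = Uᵀ * V * Matrix.diagonal sig * (Vᵀ * U) := by
          simp only [Matrix.mul_assoc]
  set P : Matrix (Fin r) (Fin r) ℝ := Hᵀ * H with hP
  have key : Matrix.trace (Wᵀ * Matrix.diagonal sig * W * P)
      = Matrix.trace (Matrix.diagonal sig * (W * P * Wᵀ)) := by
    rw [Matrix.mul_assoc, Matrix.mul_assoc, Matrix.trace_mul_comm (Wᵀ),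
      Matrix.mul_assoc, Matrix.mul_assoc]
  have diagQ : ∀ s, 0 ≤ (W * P * Wᵀ) s s := by
    intro s
    have : W * P * Wᵀ = (H * Wᵀ)ᵀ * (H * Wᵀ) := by
      rw [hP]
      simp only [Matrix.transpose_mul, Matrix.transpose_transpose, Matrix.mul_assoc]
    rw [this, Matrix.mul_apply]
    exact Finset.sum_nonneg fun j _ => by
      simp only [Matrix.transpose_apply]; exact mul_self_nonneg _
  have traceQ : Matrix.trace (W * P * Wᵀ) = Matrix.trace P := by
    rw [Matrix.trace_mul_cycle, ← Matrix.mul_assoc, hWW, Matrix.one_mul]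
  rw [hG, key]
  have expand : Matrix.trace (Matrix.diagonal sig * (W * P * Wᵀ))
      = ∑ s, sig s * (W * P * Wᵀ) s s := by
    simp [Matrix.trace, Matrix.diag, Matrix.mul_apply, Matrix.diagonal_apply,
      ite_mul, Finset.sum_ite_eq]
  rw [expand]
  calc ∑ s, sig s * (W * P * Wᵀ) s s ≤ ∑ s, sig ⟨0, hr⟩ * (W * P * Wᵀ) s s := by
        refine Finset.sum_le_sum fun s _ => mul_le_mul_of_nonneg_right ?_ (diagQ s)
        exact hmono ⟨0, hr⟩ s (by simp [Fin.le_def])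
    _ = sig ⟨0, hr⟩ * Matrix.trace (W * P * Wᵀ) := by
        rw [← Finset.mul_sum]; rfl
    _ = sig ⟨0, hr⟩ * Matrix.trace P := by rw [traceQ]

/-- value of the A1 test matrix quadratic form -/
lemma quadM1 {n m : ℕ} (A : Fin m → Matrix (Fin n) (Fin n) ℝ) (u v : Fin n → ℝ) :
    v ⬝ᵥ ((1 / (m : ℝ)) • ∑ i, (u ⬝ᵥ (A i).mulVec u) • A i
        - (2 : ℝ) • vecMulVec u u).mulVec v
      = (1 / (m : ℝ)) * ∑ i, (u ⬝ᵥ (A i).mulVec u) * (v ⬝ᵥ (A i).mulVec v)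
        - 2 * (u ⬝ᵥ v) ^ 2 := by
  rw [quad_sub, quad_smul, quad_smul, quad_vecMulVec, quad_sum]
  have : ∑ i, v ⬝ᵥ ((u ⬝ᵥ (A i).mulVec u) • A i).mulVec v
      = ∑ i, (u ⬝ᵥ (A i).mulVec u) * (v ⬝ᵥ (A i).mulVec v) :=
    Finset.sum_congr rfl fun i _ => quad_smul _ _ _ _
  rw [this, dotProduct_comm v u, sq]

/-- value of the A2 test matrix quadratic form -/
lemma quadM2 {n m : ℕ} (A : Fin m → Matrix (Fin n) (Fin n) ℝ) (a b' v1 v2 : Fin n → ℝ) :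
    v1 ⬝ᵥ ((1 / (m : ℝ)) • ∑ i, (2 : ℝ) • (A i * vecMulVec a b' * A i)
        - ((2 * (a ⬝ᵥ b')) • (1 : Matrix (Fin n) (Fin n) ℝ)
          + (2 : ℝ) • vecMulVec b' a)).mulVec v2
      = (1 / (m : ℝ)) * ∑ i, 2 * ((v1 ⬝ᵥ (A i).mulVec a) * (b' ⬝ᵥ (A i).mulVec v2))
        - (2 * (a ⬝ᵥ b') * (v1 ⬝ᵥ v2) + 2 * ((v1 ⬝ᵥ b') * (a ⬝ᵥ v2))) := by
  rw [quad_sub, quad_smul, quad_sum, quad_add, quad_smul, quad_one, quad_smul,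
    quad_vecMulVec]
  congr 2
  refine Finset.sum_congr rfl fun i _ => ?_
  rw [quad_smul, quad_sandwich]

lemma pair_helper {X Y B c e1 e2 : ℝ} (h3 : X - Y ≤ B * e1 * e2) (h1 : B ≤ c)
    (he1 : 0 ≤ e1) (he2 : 0 ≤ e2) : X ≤ Y + c * (e1 * e2) := by
  nlinarith [mul_nonneg (mul_nonneg (sub_nonneg.mpr h1) he1) he2]

set_option maxHeartbeats 1000000
theorem local_smoothness_condition {n r m : ℕ} (hr : 0 < r)
    (A : Fin m → Matrix (Fin n) (Fin n) ℝ) (hAsym : ∀ i, (A i).IsSymm)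
(Zstar : Matrix (Fin n) (Fin r) ℝ)
    (sig : Fin r → ℝ) (hpos : ∀ s, 0 < sig s)
    (hmono : ∀ s t : Fin r, s ≤ t → sig t ≤ sig s)
    (hspec : ∃ V, IsOrthoMat V ∧ Zstarᵀ * Zstar = V * Matrix.diagonal sig * Vᵀ)
    (b : Fin m → ℝ) (hb : ∀ i, b i = Matrix.trace (A i * (Zstar * Zstarᵀ)))
    (δ : ℝ) (hδ0 : 0 < δ) (hδ : δ ≤ (sig ⟨r - 1, Nat.sub_lt hr Nat.one_pos⟩) / 16)
    (hA1 : AssumpA1 A (sig ⟨0, hr⟩) r δ)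
    (hA2 : AssumpA2 A Zstar δ)
    (hAop : (1 / (m : ℝ)) * ∑ i, (opNorm (A i)) ^ 2 ≤ 9 * n)
    (Z Zbar : Matrix (Fin n) (Fin r) ℝ)
    (hZ : dSol Z Zstar ≤ Real.sqrt (3 / 16 * (sig ⟨r - 1, Nat.sub_lt hr Nat.one_pos⟩)))
    (hZbar : IsClosest Zstar Z Zbar) :
    frobNorm (gradf A b Z) ^ 2 ≤
      144 * n * (frobNorm Zbar ^ 2 + 3 / 16 * (sig ⟨r - 1, Nat.sub_lt hr Nat.one_pos⟩)) *
        (((sig ⟨0, hr⟩) + 9 / 64 * (sig ⟨r - 1, Nat.sub_lt hr Nat.one_pos⟩)) * frobNorm (Z - Zbar) ^ 2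
          + frobNorm ((Z - Zbar)ᵀ * Zbar) ^ 2) := by
  obtain ⟨V, hV, hVspec⟩ := hspec
  obtain ⟨hmem, hmin⟩ := hZbar
  obtain ⟨U, hU, hZbarEq⟩ := hmem
  have hmemZbar : Zbar ∈ solSet Zstar := ⟨U, hU, hZbarEq⟩
  set σ1 : ℝ := sig ⟨0, hr⟩ with hs1def
  set σr : ℝ := sig ⟨r - 1, Nat.sub_lt hr Nat.one_pos⟩ with hsrdef
  have hσr : 0 < σr := hpos _
  have hσ1pos : 0 < σ1 := hpos _
  have hσr1 : σr ≤ σ1 := hmono ⟨0, hr⟩ ⟨r - 1, Nat.sub_lt hr Nat.one_pos⟩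
    (by simp [Fin.le_def])
  have hr0 : ((r : ℝ)) ≠ 0 := Nat.cast_ne_zero.mpr hr.ne'
  have hrpos : (0:ℝ) < r := Nat.cast_pos.mpr hr
  have hmnn : (0:ℝ) ≤ 1 / (m:ℝ) := by positivity
  have hδr : 0 ≤ δ / r := by positivity
  -- distance bound
  haveI hne : Nonempty (solSet Zstar) :=
    ⟨⟨Zstar, 1, ⟨by simp, by simp⟩, (Matrix.mul_one Zstar).symm⟩⟩
  have hHd : frobNorm (Z - Zbar) ≤ dSol Z Zstar := by
    unfold dSol
    exact le_ciInf fun Zt => hmin Zt Zt.2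
  set H : Matrix (Fin n) (Fin r) ℝ := Z - Zbar with hHdef
  have hN2s : frobNorm H ^ 2 ≤ 3 / 16 * σr := by
    have h0 : frobNorm H ≤ Real.sqrt (3 / 16 * σr) := hHd.trans hZ
    have h1 : Real.sqrt (3 / 16 * σr) ^ 2 = 3 / 16 * σr :=
      Real.sq_sqrt (by positivity)
    nlinarith [frobNorm_nonneg H, Real.sqrt_nonneg (3 / 16 * σr)]
  have hN2nn : 0 ≤ frobNorm H ^ 2 := sq_nonneg _
  -- column norms
  have hecol : ∀ s : Fin r, vnorm (fun j => H j s) ^ 2 ≤ frobNorm H ^ 2 := by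
    intro s
    rw [frobNorm_col_sq]
    exact Finset.single_le_sum (f := fun k => vnorm (fun i => H i k) ^ 2)
      (fun k _ => sq_nonneg _) (Finset.mem_univ s)
  have hcolb : ∀ s : Fin r, Real.sqrt (∑ j, (H j s) ^ 2) ≤ Real.sqrt σ1 := by
    intro s
    have h1 : vnorm (fun j => H j s) ≤ Real.sqrt σ1 := by
      rw [show Real.sqrt σ1 = Real.sqrt (Real.sqrt σ1 ^ 2) by
        rw [Real.sqrt_sq (Real.sqrt_nonneg _)]]
      apply Real.sqrt_le_sqrt
      rw [← enorm_sq]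
      have h2 : Real.sqrt σ1 ^ 2 = σ1 := Real.sq_sqrt hσ1pos.le
      nlinarith [hecol s, hN2s]
    exact h1
  -- A1 pairwise bound
  have hA1pair : ∀ s k : Fin r,
      (1 / (m : ℝ)) * ∑ i, ((fun j => H j s) ⬝ᵥ (A i).mulVec (fun j => H j s))
          * ((fun j => H j k) ⬝ᵥ (A i).mulVec (fun j => H j k))
        ≤ 2 * ((fun j => H j s) ⬝ᵥ (fun j => H j k)) ^ 2
          + (δ / r) * (vnorm (fun j => H j k) * vnorm (fun j => H j k)) := by
    intro s k
    have h1 := hA1 (fun j => H j s) (hcolb s)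
    have h2 := dotProduct_mulVec_le
      ((1 / (m : ℝ)) • ∑ i, ((fun j => H j s) ⬝ᵥ (A i).mulVec (fun j => H j s)) • A i
        - (2 : ℝ) • vecMulVec (fun j => H j s) (fun j => H j s))
      (fun j => H j k) (fun j => H j k)
    rw [quadM1] at h2
    exact pair_helper (abs_le.mp h2).2 h1 (enorm_nonneg _) (enorm_nonneg _)
  -- A2 pairwise bound
  have hA2pair : ∀ s k : Fin r,
      2 * ((1 / (m : ℝ)) * ∑ i, ((fun j => Zbar j s) ⬝ᵥ (A i).mulVec (fun j => H j s))
          * ((fun j => Zbar j k) ⬝ᵥ (A i).mulVec (fun j => H j k)))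
        ≤ 2 * ((fun j => Zbar j s) ⬝ᵥ (fun j => Zbar j k))
            * ((fun j => H j s) ⬝ᵥ (fun j => H j k))
          + 2 * (((fun j => H j s) ⬝ᵥ (fun j => Zbar j k))
            * ((fun j => Zbar j s) ⬝ᵥ (fun j => H j k)))
          + (δ / r) * (vnorm (fun j => H j s) * vnorm (fun j => H j k)) := by
    intro s k
    have h1 := hA2 Zbar hmemZbar s k
    have h2 := dotProduct_mulVec_le
      ((1 / (m : ℝ)) • ∑ i, (2 : ℝ) •
          (A i * vecMulVec (fun j => Zbar j s) (fun j => Zbar j k) * A i)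
        - ((2 * ((fun j => Zbar j s) ⬝ᵥ fun j => Zbar j k))
              • (1 : Matrix (Fin n) (Fin n) ℝ)
            + (2 : ℝ) • vecMulVec (fun j => Zbar j k) (fun j => Zbar j s)))
      (fun j => H j s) (fun j => H j k)
    rw [quadM2] at h2
    have hsym : ∀ i : Fin m, ((fun j => H j s) ⬝ᵥ (A i).mulVec (fun j => Zbar j s))
        = ((fun j => Zbar j s) ⬝ᵥ (A i).mulVec (fun j => H j s)) := fun i =>
      quad_symm _ _ _ (hAsym i)
    have heq : (1 / (m : ℝ)) * ∑ i,
        2 * (((fun j => H j s) ⬝ᵥ (A i).mulVec (fun j => Zbar j s))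
          * ((fun j => Zbar j k) ⬝ᵥ (A i).mulVec (fun j => H j k)))
        = 2 * ((1 / (m : ℝ)) * ∑ i,
          ((fun j => Zbar j s) ⬝ᵥ (A i).mulVec (fun j => H j s))
          * ((fun j => Zbar j k) ⬝ᵥ (A i).mulVec (fun j => H j k))) := by
      rw [Finset.sum_congr rfl fun i _ => by rw [hsym i], ← Finset.mul_sum]
      ring
    rw [heq] at h2
    exact pair_helper (abs_le.mp h2).2 h1 (enorm_nonneg _) (enorm_nonneg _)
  -- T1: spectral bound
  have hT1 : ∑ s, ∑ k, ((fun j => Zbar j s) ⬝ᵥ (fun j => Zbar j k))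
        * ((fun j => H j s) ⬝ᵥ (fun j => H j k))
      ≤ σ1 * frobNorm H ^ 2 := by
    have e2 : Matrix.trace (Hᵀ * H) = frobNorm H ^ 2 := by
      rw [frobNorm_sq]
      simp only [Matrix.trace, Matrix.diag, Matrix.mul_apply, Matrix.transpose_apply]
      rw [Finset.sum_comm]
      exact Finset.sum_congr rfl fun j _ => Finset.sum_congr rfl fun t _ => by ring
    have e1 : ∑ s, ∑ k, ((fun j => Zbar j s) ⬝ᵥ (fun j => Zbar j k))
          * ((fun j => H j s) ⬝ᵥ (fun j => H j k))
        = Matrix.trace ((Zbarᵀ * Zbar) * (Hᵀ * H)) := by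
      rw [trace_mul_sum]
      refine Finset.sum_congr rfl fun s _ => Finset.sum_congr rfl fun k _ => ?_
      simp only [Matrix.mul_apply, Matrix.transpose_apply, dotProduct]
      congr 1
      exact Finset.sum_congr rfl fun j _ => mul_comm _ _
    rw [e1, ← e2, hZbarEq]
    exact spectral_bound hr sig hmono Zstar V hV hVspec U hU H
  -- T2
  have hT2 : ∑ s, ∑ k, (((fun j => H j s) ⬝ᵥ (fun j => Zbar j k))
        * ((fun j => Zbar j s) ⬝ᵥ (fun j => H j k)))
      ≤ frobNorm (Hᵀ * Zbar) ^ 2 := by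
    have hfr : frobNorm (Hᵀ * Zbar) ^ 2
        = ∑ s, ∑ k, ((fun j => H j s) ⬝ᵥ (fun j => Zbar j k)) ^ 2 := by
      rw [frobNorm_sq]
      exact Finset.sum_congr rfl fun s _ => Finset.sum_congr rfl fun k _ => by
        simp [Matrix.mul_apply, Matrix.transpose_apply, dotProduct]
    have hcomm : ∀ s k : Fin r, ((fun j => Zbar j s) ⬝ᵥ (fun j => H j k))
        = ((fun j => H j k) ⬝ᵥ (fun j => Zbar j s)) := fun s k => dotProduct_comm _ _
    have h1 : ∑ s, ∑ k, (((fun j => H j s) ⬝ᵥ (fun j => Zbar j k))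
          * ((fun j => Zbar j s) ⬝ᵥ (fun j => H j k)))
        ≤ ∑ s, ∑ k, (((fun j => H j s) ⬝ᵥ (fun j => Zbar j k)) ^ 2 / 2
            + ((fun j => H j k) ⬝ᵥ (fun j => Zbar j s)) ^ 2 / 2) := by
      refine Finset.sum_le_sum fun s _ => Finset.sum_le_sum fun k _ => ?_
      rw [hcomm s k]
      nlinarith [sq_nonneg (((fun j => H j s) ⬝ᵥ (fun j => Zbar j k))
        - ((fun j => H j k) ⬝ᵥ (fun j => Zbar j s)))]
    have h2 : ∑ s, ∑ k, (((fun j => H j s) ⬝ᵥ (fun j => Zbar j k)) ^ 2 / 2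
            + ((fun j => H j k) ⬝ᵥ (fun j => Zbar j s)) ^ 2 / 2)
        = ∑ s, ∑ k, ((fun j => H j s) ⬝ᵥ (fun j => Zbar j k)) ^ 2 := by
      rw [Finset.sum_congr rfl fun s (_ : s ∈ Finset.univ) => Finset.sum_add_distrib,
        Finset.sum_add_distrib]
      have hsw : ∑ s, ∑ k, ((fun j => H j k) ⬝ᵥ (fun j => Zbar j s)) ^ 2 / 2
          = ∑ s, ∑ k, ((fun j => H j s) ⬝ᵥ (fun j => Zbar j k)) ^ 2 / 2 :=
        Finset.sum_comm
      rw [hsw, ← Finset.sum_add_distrib]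
      refine Finset.sum_congr rfl fun s _ => ?_
      rw [← Finset.sum_add_distrib]
      exact Finset.sum_congr rfl fun k _ => by ring
    rw [hfr]
    calc _ ≤ _ := h1
      _ = _ := h2
  -- T3
  have hT3 : ∑ s, ∑ k, vnorm (fun j => H j s) * vnorm (fun j => H j k)
      ≤ (r : ℝ) * frobNorm H ^ 2 := by
    have h1 : ∑ s, ∑ k, vnorm (fun j => H j s) * vnorm (fun j => H j k)
        = (∑ s, vnorm (fun j => H j s)) ^ 2 := by
      rw [sq, Finset.sum_mul_sum]
    have h2 := Finset.sum_mul_sq_le_sq_mul_sq Finset.univ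
      (fun s : Fin r => vnorm (fun j => H j s)) (fun _ => (1 : ℝ))
    simp only [mul_one, one_pow] at h2
    have h3 : ∑ _s : Fin r, (1 : ℝ) = (r : ℝ) := by simp
    rw [h3] at h2
    have h4 : ∑ s, vnorm (fun j => H j s) ^ 2 = frobNorm H ^ 2 :=
      (frobNorm_col_sq H).symm
    rw [h1]
    calc (∑ s, vnorm (fun j => H j s)) ^ 2
        ≤ (∑ s, vnorm (fun j => H j s) ^ 2) * r := h2
      _ = (r : ℝ) * frobNorm H ^ 2 := by rw [h4]; ring
  -- Q
  have hQ : ∑ s, ∑ k, ((fun j => H j s) ⬝ᵥ (fun j => H j k)) ^ 2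
      ≤ (frobNorm H ^ 2) ^ 2 := by
    have h1 : ∀ s k : Fin r, ((fun j => H j s) ⬝ᵥ (fun j => H j k)) ^ 2
        ≤ vnorm (fun j => H j s) ^ 2 * vnorm (fun j => H j k) ^ 2 := by
      intro s k
      have := Finset.sum_mul_sq_le_sq_mul_sq Finset.univ
        (fun j => H j s) (fun j => H j k)
      rw [enorm_sq, enorm_sq]
      exact this
    calc ∑ s, ∑ k, ((fun j => H j s) ⬝ᵥ (fun j => H j k)) ^ 2
        ≤ ∑ s, ∑ k, vnorm (fun j => H j s) ^ 2 * vnorm (fun j => H j k) ^ 2 :=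
          Finset.sum_le_sum fun s _ => Finset.sum_le_sum fun k _ => h1 s k
      _ = (∑ s, vnorm (fun j => H j s) ^ 2) * (∑ k, vnorm (fun j => H j k) ^ 2) :=
          (Finset.sum_mul_sum _ _ _ _).symm
      _ = (frobNorm H ^ 2) ^ 2 := by rw [← frobNorm_col_sq]; ring
  -- sum swaps
  have hswapq : (1 / (m : ℝ)) * ∑ i,
        (∑ s, (fun j => Zbar j s) ⬝ᵥ (A i).mulVec (fun j => H j s)) ^ 2
      = ∑ s, ∑ k, ((1 / (m : ℝ)) * ∑ i,
          ((fun j => Zbar j s) ⬝ᵥ (A i).mulVec (fun j => H j s))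
          * ((fun j => Zbar j k) ⬝ᵥ (A i).mulVec (fun j => H j k))) := by
    rw [sum_sq_swap (fun i s => (fun j => Zbar j s) ⬝ᵥ (A i).mulVec (fun j => H j s)),
      Finset.mul_sum]
    exact Finset.sum_congr rfl fun s _ => Finset.mul_sum _ _ _
  have hswapc : (1 / (m : ℝ)) * ∑ i,
        (∑ s, (fun j => H j s) ⬝ᵥ (A i).mulVec (fun j => H j s)) ^ 2
      = ∑ s, ∑ k, ((1 / (m : ℝ)) * ∑ i,
          ((fun j => H j s) ⬝ᵥ (A i).mulVec (fun j => H j s))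
          * ((fun j => H j k) ⬝ᵥ (A i).mulVec (fun j => H j k))) := by
    rw [sum_sq_swap (fun i s => (fun j => H j s) ⬝ᵥ (A i).mulVec (fun j => H j s)),
      Finset.mul_sum]
    exact Finset.sum_congr rfl fun s _ => Finset.mul_sum _ _ _
  -- As bound
  have hAsB : 2 * ((1 / (m : ℝ)) * ∑ i,
        (∑ s, (fun j => Zbar j s) ⬝ᵥ (A i).mulVec (fun j => H j s)) ^ 2)
      ≤ 2 * (σ1 * frobNorm H ^ 2) + 2 * frobNorm (Hᵀ * Zbar) ^ 2
        + (δ / r) * ((r : ℝ) * frobNorm H ^ 2) := by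
    rw [hswapq]
    have step1 : 2 * (∑ s, ∑ k, ((1 / (m : ℝ)) * ∑ i,
          ((fun j => Zbar j s) ⬝ᵥ (A i).mulVec (fun j => H j s))
          * ((fun j => Zbar j k) ⬝ᵥ (A i).mulVec (fun j => H j k))))
        ≤ ∑ s, ∑ k, (2 * ((fun j => Zbar j s) ⬝ᵥ (fun j => Zbar j k))
            * ((fun j => H j s) ⬝ᵥ (fun j => H j k))
          + 2 * (((fun j => H j s) ⬝ᵥ (fun j => Zbar j k))
            * ((fun j => Zbar j s) ⬝ᵥ (fun j => H j k)))
          + (δ / r) * (vnorm (fun j => H j s) * vnorm (fun j => H j k))) := by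
      rw [Finset.mul_sum]
      refine Finset.sum_le_sum fun s _ => ?_
      rw [Finset.mul_sum]
      exact Finset.sum_le_sum fun k _ => hA2pair s k
    have step2 : ∑ s, ∑ k, (2 * ((fun j => Zbar j s) ⬝ᵥ (fun j => Zbar j k))
            * ((fun j => H j s) ⬝ᵥ (fun j => H j k))
          + 2 * (((fun j => H j s) ⬝ᵥ (fun j => Zbar j k))
            * ((fun j => Zbar j s) ⬝ᵥ (fun j => H j k)))
          + (δ / r) * (vnorm (fun j => H j s) * vnorm (fun j => H j k)))
        ≤ 2 * (σ1 * frobNorm H ^ 2) + 2 * frobNorm (Hᵀ * Zbar) ^ 2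
          + (δ / r) * ((r : ℝ) * frobNorm H ^ 2) := by
      have e1 : ∑ s, ∑ k, (2 * ((fun j => Zbar j s) ⬝ᵥ (fun j => Zbar j k))
            * ((fun j => H j s) ⬝ᵥ (fun j => H j k))
          + 2 * (((fun j => H j s) ⬝ᵥ (fun j => Zbar j k))
            * ((fun j => Zbar j s) ⬝ᵥ (fun j => H j k)))
          + (δ / r) * (vnorm (fun j => H j s) * vnorm (fun j => H j k)))
          = 2 * (∑ s, ∑ k, ((fun j => Zbar j s) ⬝ᵥ (fun j => Zbar j k))
              * ((fun j => H j s) ⬝ᵥ (fun j => H j k)))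
            + 2 * (∑ s, ∑ k, (((fun j => H j s) ⬝ᵥ (fun j => Zbar j k))
              * ((fun j => Zbar j s) ⬝ᵥ (fun j => H j k))))
            + (δ / r) * (∑ s, ∑ k,
              vnorm (fun j => H j s) * vnorm (fun j => H j k)) := by
        simp only [Finset.sum_add_distrib, Finset.mul_sum]
        congr 2
        exact Finset.sum_congr rfl fun s _ => Finset.sum_congr rfl fun k _ => by ring
      rw [e1]
      have b1 := mul_le_mul_of_nonneg_left hT1 (by norm_num : (0:ℝ) ≤ 2)
      have b2 := mul_le_mul_of_nonneg_left hT2 (by norm_num : (0:ℝ) ≤ 2)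
      have b3 := mul_le_mul_of_nonneg_left hT3 hδr
      linarith
    linarith [step1, step2]
  -- Cs bound
  have hCsB : (1 / (m : ℝ)) * ∑ i,
        (∑ s, (fun j => H j s) ⬝ᵥ (A i).mulVec (fun j => H j s)) ^ 2
      ≤ 2 * (frobNorm H ^ 2) ^ 2 + (δ / r) * ((r : ℝ) * frobNorm H ^ 2) := by
    rw [hswapc]
    have step1 : ∑ s, ∑ k, ((1 / (m : ℝ)) * ∑ i,
          ((fun j => H j s) ⬝ᵥ (A i).mulVec (fun j => H j s))
          * ((fun j => H j k) ⬝ᵥ (A i).mulVec (fun j => H j k)))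
        ≤ ∑ s, ∑ k, (2 * ((fun j => H j s) ⬝ᵥ (fun j => H j k)) ^ 2
          + (δ / r) * (vnorm (fun j => H j k) * vnorm (fun j => H j k))) :=
      Finset.sum_le_sum fun s _ => Finset.sum_le_sum fun k _ => hA1pair s k
    have step2 : ∑ s, ∑ k, (2 * ((fun j => H j s) ⬝ᵥ (fun j => H j k)) ^ 2
          + (δ / r) * (vnorm (fun j => H j k) * vnorm (fun j => H j k)))
        ≤ 2 * (frobNorm H ^ 2) ^ 2 + (δ / r) * ((r : ℝ) * frobNorm H ^ 2) := by
      have e1 : ∑ s, ∑ k, (2 * ((fun j => H j s) ⬝ᵥ (fun j => H j k)) ^ 2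
          + (δ / r) * (vnorm (fun j => H j k) * vnorm (fun j => H j k)))
          = 2 * (∑ s, ∑ k, ((fun j => H j s) ⬝ᵥ (fun j => H j k)) ^ 2)
            + (δ / r) * (∑ s : Fin r, ∑ k, vnorm (fun j => H j k) ^ 2) := by
        simp only [Finset.sum_add_distrib, Finset.mul_sum]
        congr 1
        exact Finset.sum_congr rfl fun s _ => Finset.sum_congr rfl fun k _ => by ring
      rw [e1]
      have b1 := mul_le_mul_of_nonneg_left hQ (by norm_num : (0:ℝ) ≤ 2)
      have e2 : ∑ s : Fin r, ∑ k, vnorm (fun j => H j k) ^ 2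
          = (r : ℝ) * frobNorm H ^ 2 := by
        rw [Finset.sum_const, ← frobNorm_col_sq]
        simp [nsmul_eq_mul]
      rw [e2]
      linarith
    linarith [step1, step2]
  -- residual identity
  have hZe : Z = Zbar + H := by rw [hHdef]; abel
  have hri : ∀ i, Matrix.trace (Zᵀ * A i * Z) - b i
      = 2 * (∑ s, (fun j => Zbar j s) ⬝ᵥ (A i).mulVec (fun j => H j s))
        + ∑ s, (fun j => H j s) ⬝ᵥ (A i).mulVec (fun j => H j s) := by
    intro i
    have hbi : b i = Matrix.trace (Zbarᵀ * A i * Zbar) := by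
      rw [hb i, hZbarEq]
      have h1 : (Zstar * U)ᵀ * A i * (Zstar * U)
          = Uᵀ * (Zstarᵀ * A i * Zstar) * U := by
        rw [Matrix.transpose_mul]; simp only [Matrix.mul_assoc]
      change (A i * (Zstar * Zstarᵀ)).trace = ((Zstar * U)ᵀ * A i * (Zstar * U)).trace
      rw [h1, Matrix.trace_mul_cycle Uᵀ (Zstarᵀ * A i * Zstar) U, hU.1,
        Matrix.one_mul, Matrix.trace_mul_cycle Zstarᵀ (A i) Zstar]
      rw [Matrix.trace_mul_comm (A i) (Zstar * Zstarᵀ)]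
    have hsymtr : Matrix.trace (Hᵀ * A i * Zbar) = Matrix.trace (Zbarᵀ * A i * H) := by
      rw [← Matrix.trace_transpose (Hᵀ * A i * Zbar)]
      have h2 : (Hᵀ * A i * Zbar)ᵀ = Zbarᵀ * A i * H := by
        rw [Matrix.transpose_mul, Matrix.transpose_mul, Matrix.transpose_transpose,
          (hAsym i).eq, Matrix.mul_assoc]
      rw [h2]
    have hexp : Matrix.trace (Zᵀ * A i * Z)
        = Matrix.trace (Zbarᵀ * A i * Zbar) + 2 * Matrix.trace (Zbarᵀ * A i * H)
          + Matrix.trace (Hᵀ * A i * H) := by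
      rw [hZe, Matrix.transpose_add, Matrix.add_mul, Matrix.add_mul,
        Matrix.mul_add, Matrix.mul_add, Matrix.trace_add, Matrix.trace_add,
        Matrix.trace_add]
      linarith [hsymtr]
    rw [hexp, hbi, trace_quad (A i) Zbar H, trace_quad (A i) H H]
    ring
  -- gradient bound
  have hgle : frobNorm (gradf A b Z) ≤ (1 / (m : ℝ))
      * ((∑ i, |Matrix.trace (Zᵀ * A i * Z) - b i| * opNorm (A i)) * frobNorm Z) := by
    have h0 : gradf A b Z
        = (1 / (m : ℝ)) • ∑ i, (Matrix.trace (Zᵀ * A i * Z) - b i) • (A i * Z) := rfl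
    rw [h0, frobNorm_smul, abs_of_nonneg hmnn]
    refine mul_le_mul_of_nonneg_left ?_ hmnn
    refine (frobNorm_sum_le _).trans ?_
    rw [Finset.sum_mul]
    refine Finset.sum_le_sum fun i _ => ?_
    rw [frobNorm_smul, mul_assoc]
    exact mul_le_mul_of_nonneg_left (frobNorm_mul_le _ _) (abs_nonneg _)
  -- Cauchy-Schwarz
  have hCS : (∑ i, |Matrix.trace (Zᵀ * A i * Z) - b i| * opNorm (A i)) ^ 2
      ≤ (∑ i, (Matrix.trace (Zᵀ * A i * Z) - b i) ^ 2) * ∑ i, opNorm (A i) ^ 2 := by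
    have h1 := Finset.sum_mul_sq_le_sq_mul_sq Finset.univ
      (fun i => |Matrix.trace (Zᵀ * A i * Z) - b i|) (fun i => opNorm (A i))
    simpa [sq_abs] using h1
  have hG2 : frobNorm (gradf A b Z) ^ 2
      ≤ ((1 / (m : ℝ)) * ∑ i, (Matrix.trace (Zᵀ * A i * Z) - b i) ^ 2)
        * ((1 / (m : ℝ)) * ∑ i, opNorm (A i) ^ 2) * frobNorm Z ^ 2 := by
    have h1 := pow_le_pow_left₀ (frobNorm_nonneg (gradf A b Z)) hgle 2
    have h2 : ((1 / (m : ℝ))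
        * ((∑ i, |Matrix.trace (Zᵀ * A i * Z) - b i| * opNorm (A i)) * frobNorm Z)) ^ 2
        = (1 / (m : ℝ))^2 * (∑ i, |Matrix.trace (Zᵀ * A i * Z) - b i| * opNorm (A i))^2
          * frobNorm Z ^ 2 := by ring
    have h3 : (1 / (m : ℝ))^2
          * (∑ i, |Matrix.trace (Zᵀ * A i * Z) - b i| * opNorm (A i))^2
          * frobNorm Z ^ 2
        ≤ (1 / (m : ℝ))^2 * ((∑ i, (Matrix.trace (Zᵀ * A i * Z) - b i) ^ 2)
            * ∑ i, opNorm (A i) ^ 2) * frobNorm Z ^ 2 := by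
      refine mul_le_mul_of_nonneg_right ?_ (sq_nonneg _)
      exact mul_le_mul_of_nonneg_left hCS (by positivity)
    calc frobNorm (gradf A b Z) ^ 2 ≤ _ := h1
      _ = _ := h2
      _ ≤ _ := h3
      _ = ((1 / (m : ℝ)) * ∑ i, (Matrix.trace (Zᵀ * A i * Z) - b i) ^ 2)
        * ((1 / (m : ℝ)) * ∑ i, opNorm (A i) ^ 2) * frobNorm Z ^ 2 := by ring
  -- bound on mean squared residual
  have hRR : (1 / (m : ℝ)) * ∑ i, (Matrix.trace (Zᵀ * A i * Z) - b i) ^ 2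
      ≤ 8 * ((1 / (m : ℝ)) * ∑ i,
          (∑ s, (fun j => Zbar j s) ⬝ᵥ (A i).mulVec (fun j => H j s)) ^ 2)
        + 2 * ((1 / (m : ℝ)) * ∑ i,
          (∑ s, (fun j => H j s) ⬝ᵥ (A i).mulVec (fun j => H j s)) ^ 2) := by
    have h1 : ∀ i : Fin m, (Matrix.trace (Zᵀ * A i * Z) - b i) ^ 2
        ≤ 8 * (∑ s, (fun j => Zbar j s) ⬝ᵥ (A i).mulVec (fun j => H j s)) ^ 2
          + 2 * (∑ s, (fun j => H j s) ⬝ᵥ (A i).mulVec (fun j => H j s)) ^ 2 := by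
      intro i
      rw [hri i]
      nlinarith [sq_nonneg (2 * (∑ s, (fun j => Zbar j s) ⬝ᵥ (A i).mulVec (fun j => H j s))
        - (∑ s, (fun j => H j s) ⬝ᵥ (A i).mulVec (fun j => H j s)))]
    have h2a : ∑ i, (Matrix.trace (Zᵀ * A i * Z) - b i) ^ 2
        ≤ ∑ i, (8 * (∑ s, (fun j => Zbar j s) ⬝ᵥ (A i).mulVec (fun j => H j s)) ^ 2
          + 2 * (∑ s, (fun j => H j s) ⬝ᵥ (A i).mulVec (fun j => H j s)) ^ 2) :=
      Finset.sum_le_sum fun i _ => h1 i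
    have h2 := mul_le_mul_of_nonneg_left h2a hmnn
    have h3 : (1 / (m : ℝ)) * ∑ i,
        (8 * (∑ s, (fun j => Zbar j s) ⬝ᵥ (A i).mulVec (fun j => H j s)) ^ 2
          + 2 * (∑ s, (fun j => H j s) ⬝ᵥ (A i).mulVec (fun j => H j s)) ^ 2)
        = 8 * ((1 / (m : ℝ)) * ∑ i,
            (∑ s, (fun j => Zbar j s) ⬝ᵥ (A i).mulVec (fun j => H j s)) ^ 2)
          + 2 * ((1 / (m : ℝ)) * ∑ i,
            (∑ s, (fun j => H j s) ⬝ᵥ (A i).mulVec (fun j => H j s)) ^ 2) := by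
      rw [Finset.sum_add_distrib, mul_add]
      congr 1
      · rw [← Finset.mul_sum]
        ring
      · rw [← Finset.mul_sum]
        ring
    rw [h3] at h2
    exact h2
  -- numeric assembly
  have hdr : (δ / r) * ((r : ℝ) * frobNorm H ^ 2) = δ * frobNorm H ^ 2 := by
    field_simp
  have hdN : δ * frobNorm H ^ 2 ≤ σr / 16 * frobNorm H ^ 2 :=
    mul_le_mul_of_nonneg_right hδ hN2nn
  have hNN : (frobNorm H ^ 2) ^ 2 ≤ 3 / 16 * σr * frobNorm H ^ 2 := by
    calc (frobNorm H ^ 2) ^ 2 = frobNorm H ^ 2 * frobNorm H ^ 2 := sq (frobNorm H ^ 2)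
      _ ≤ (3 / 16 * σr) * frobNorm H ^ 2 := mul_le_mul_of_nonneg_right hN2s hN2nn
  have hXnn : 0 ≤ (σ1 + 9 / 64 * σr) * frobNorm H ^ 2 + frobNorm (Hᵀ * Zbar) ^ 2 := by
    have : 0 ≤ (σ1 + 9 / 64 * σr) := by linarith
    positivity
  have hstep : (1 / (m : ℝ)) * ∑ i, (Matrix.trace (Zᵀ * A i * Z) - b i) ^ 2
      ≤ 8 * ((σ1 + 9 / 64 * σr) * frobNorm H ^ 2 + frobNorm (Hᵀ * Zbar) ^ 2) := by
    rw [hdr] at hAsB hCsB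
    linarith [hAsB, hCsB, hRR, hdN, hNN]
  have hF2 : frobNorm Z ^ 2 ≤ 2 * (frobNorm Zbar ^ 2 + 3 / 16 * σr) := by
    have h1 : frobNorm Z ≤ frobNorm Zbar + frobNorm H := by
      rw [hZe]; exact frobNorm_add_le _ _
    nlinarith [mul_self_le_mul_self (frobNorm_nonneg Z) h1,
      sq_nonneg (frobNorm Zbar - frobNorm H), hN2s]
  have hTTnn : 0 ≤ (1 / (m : ℝ)) * ∑ i, opNorm (A i) ^ 2 := by positivity
  have h8Xnn : 0 ≤ 8 * ((σ1 + 9 / 64 * σr) * frobNorm H ^ 2 + frobNorm (Hᵀ * Zbar) ^ 2) := by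
    linarith
  have hnnn : (0:ℝ) ≤ 9 * n := by positivity
  have k1 : ((1 / (m : ℝ)) * ∑ i, (Matrix.trace (Zᵀ * A i * Z) - b i) ^ 2)
        * ((1 / (m : ℝ)) * ∑ i, opNorm (A i) ^ 2) * frobNorm Z ^ 2
      ≤ (8 * ((σ1 + 9 / 64 * σr) * frobNorm H ^ 2 + frobNorm (Hᵀ * Zbar) ^ 2))
        * ((1 / (m : ℝ)) * ∑ i, opNorm (A i) ^ 2) * frobNorm Z ^ 2 :=
    mul_le_mul_of_nonneg_right (mul_le_mul_of_nonneg_right hstep hTTnn) (sq_nonneg _)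
  have k2 : (8 * ((σ1 + 9 / 64 * σr) * frobNorm H ^ 2 + frobNorm (Hᵀ * Zbar) ^ 2))
        * ((1 / (m : ℝ)) * ∑ i, opNorm (A i) ^ 2) * frobNorm Z ^ 2
      ≤ (8 * ((σ1 + 9 / 64 * σr) * frobNorm H ^ 2 + frobNorm (Hᵀ * Zbar) ^ 2))
        * (9 * n) * frobNorm Z ^ 2 :=
    mul_le_mul_of_nonneg_right (mul_le_mul_of_nonneg_left hAop h8Xnn) (sq_nonneg _)
  have k3 : (8 * ((σ1 + 9 / 64 * σr) * frobNorm H ^ 2 + frobNorm (Hᵀ * Zbar) ^ 2))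
        * (9 * n) * frobNorm Z ^ 2
      ≤ (8 * ((σ1 + 9 / 64 * σr) * frobNorm H ^ 2 + frobNorm (Hᵀ * Zbar) ^ 2))
        * (9 * n) * (2 * (frobNorm Zbar ^ 2 + 3 / 16 * σr)) :=
    mul_le_mul_of_nonneg_left hF2 (mul_nonneg h8Xnn hnnn)
  have kfin : (8 * ((σ1 + 9 / 64 * σr) * frobNorm H ^ 2 + frobNorm (Hᵀ * Zbar) ^ 2))
        * (9 * n) * (2 * (frobNorm Zbar ^ 2 + 3 / 16 * σr))
      = 144 * n * (frobNorm Zbar ^ 2 + 3 / 16 * σr)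
        * ((σ1 + 9 / 64 * σr) * frobNorm H ^ 2 + frobNorm (Hᵀ * Zbar) ^ 2) := by
    ring
  calc frobNorm (gradf A b Z) ^ 2 ≤ _ := hG2
    _ ≤ _ := k1
    _ ≤ _ := k2
    _ ≤ _ := k3
    _ = _ := kfin
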